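/- arXiv:1204.0998 — 2 statements merged into one kernel-verified Lean document; each statement's English description precedes it below -/
import Mathlib

section
/- Let g be analytic near k₀ ∈ ℝ with g(k₀) > 0 and g real on the reals, m ≥ 2 an integer, and h(k) = (k−k₀)·g(k)^{1/m} as above with local inverse h^{-1} defined on a ball N centered at 0. Then h^{-1} maps N ∩ {Im ν > 0} into the open upper half-plane and N ∩ {Im ν < 0} into the open lower half-plane. -/
open Complex Set Metric

/-- The local inverse h⁻¹ of h(k) = (k−k₀)·g(k)^{1/m} maps the upper half-plane
into the upper half-plane and the lower half-plane into the lower half-plane. -/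
theorem stmt10 (g : ℂ → ℂ) (k₀ : ℝ) (m : ℕ) (hm : 2 ≤ m)
    (han : AnalyticAt ℂ g (k₀ : ℂ))
    (hreal : ∀ x : ℝ, (g x).im = 0)
    (hpos : 0 < (g (k₀ : ℂ)).re)
    (hinv : ℂ → ℂ) (r : ℝ) (hr : 0 < r)
    (hinv_an : AnalyticOnNhd ℂ hinv (ball (0 : ℂ) r))
    (hinv0 : hinv 0 = (k₀ : ℂ))
    (hinv_right : ∀ ν ∈ ball (0 : ℂ) r,
      (hinv ν - (k₀ : ℂ)) * g (hinv ν) ^ ((1 : ℂ) / m) = ν) :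
    ∃ r' : ℝ, 0 < r' ∧ r' ≤ r ∧ ∀ ν ∈ ball (0 : ℂ) r',
      (0 < ν.im → 0 < (hinv ν).im) ∧ (ν.im < 0 → (hinv ν).im < 0) := by
  classical
  set w : ℂ → ℂ := fun k => g k ^ ((1 : ℂ) / m) with hwdef
  set c0 : ℝ := (g (k₀ : ℂ)).re with hc0
  have hgk₀ : g (k₀ : ℂ) = (c0 : ℂ) := by
    apply Complex.ext
    · simp [hc0]
    · simpa using hreal k₀
  have hexp : ((1 : ℂ) / m) = (((1 / m : ℝ)) : ℂ) := by push_cast; ring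
  have hwk₀ : w (k₀ : ℂ) = ((c0 ^ (1 / (m : ℝ)) : ℝ) : ℂ) := by
    simp only [hwdef]
    rw [hgk₀, hexp, ← Complex.ofReal_cpow hpos.le]
  set c : ℝ := c0 ^ (1 / (m : ℝ)) with hc
  have hcpos : 0 < c := Real.rpow_pos_of_pos hpos _
  -- w analytic at k₀
  have hslit : g (k₀ : ℂ) ∈ Complex.slitPlane := Or.inl hpos
  have hwan : AnalyticAt ℂ w (k₀ : ℂ) := han.cpow analyticAt_const hslit
  -- Lipschitz bound for w near k₀
  obtain ⟨K, t, ht, hlip⟩ :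
      ∃ K : NNReal, ∃ t ∈ nhds (k₀ : ℂ), LipschitzOnWith K w t :=
    (hwan.contDiffAt (n := 1)).exists_lipschitzOnWith
  obtain ⟨ρ₁, hρ₁, hballt⟩ := Metric.mem_nhds_iff.mp ht
  set L : ℝ := (K : ℝ) + 1 with hL
  have hLpos : 0 < L := by positivity
  -- Re w ≥ c/2 near k₀, and Re g > 0 near k₀
  have hcont : ContinuousAt (fun k => ((w k).re, (g k).re)) (k₀ : ℂ) :=
    ContinuousAt.prodMk (Complex.continuous_re.continuousAt.comp hwan.continuousAt)
      (Complex.continuous_re.continuousAt.comp han.continuousAt)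
  have hev : ∀ᶠ k in nhds (k₀ : ℂ), c / 2 < (w k).re ∧ 0 < (g k).re := by
    have h1 : ∀ᶠ k in nhds (k₀ : ℂ), c / 2 < (w k).re := by
      have : ContinuousAt (fun k => (w k).re) (k₀ : ℂ) :=
        Complex.continuous_re.continuousAt.comp hwan.continuousAt
      have hlt : c / 2 < (w (k₀ : ℂ)).re := by rw [hwk₀]; simp; linarith
      exact this.eventually_const_lt hlt
    have h2 : ∀ᶠ k in nhds (k₀ : ℂ), 0 < (g k).re := by
      have : ContinuousAt (fun k => (g k).re) (k₀ : ℂ) :=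
        Complex.continuous_re.continuousAt.comp han.continuousAt
      have hlt : (0 : ℝ) < (g (k₀ : ℂ)).re := hpos
      exact this.eventually_const_lt hlt
    exact h1.and h2
  obtain ⟨ρ₂, hρ₂, hball2⟩ := Metric.eventually_nhds_iff_ball.mp hev
  -- choose ρ
  set ρ : ℝ := min (min ρ₁ ρ₂) (c / (4 * L)) with hρdef
  have hρpos : 0 < ρ := by
    apply lt_min (lt_min hρ₁ hρ₂)
    positivity
  have hρL : ρ * L ≤ c / 4 := by
    have h1 : ρ ≤ c / (4 * L) := min_le_right _ _
    calc ρ * L ≤ (c / (4 * L)) * L := by nlinarith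
    _ = c / 4 := by field_simp
  -- continuity of hinv at 0
  have hinvcont : ContinuousAt hinv 0 :=
    (hinv_an 0 (by simpa using hr)).continuousAt
  obtain ⟨δ, hδpos, hδ⟩ := Metric.continuousAt_iff.mp hinvcont ρ hρpos
  refine ⟨min (min δ r) r, by positivity, min_le_right _ _, ?_⟩
  intro ν hν
  have hνr : ν ∈ ball (0 : ℂ) r := by
    rcases Metric.mem_ball.mp hν with h
    exact Metric.mem_ball.mpr (lt_of_lt_of_le h (le_trans (min_le_left _ _) (min_le_right _ _)))
  have hνδ : dist ν 0 < δ := lt_of_lt_of_le (Metric.mem_ball.mp hν)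
    (le_trans (min_le_left _ _) (min_le_left _ _))
  have hk : dist (hinv ν) (k₀ : ℂ) < ρ := by
    have := hδ hνδ
    rwa [hinv0] at this
  set k : ℂ := hinv ν with hkdef
  -- basic quantities
  set u : ℝ := k.re - k₀ with hu
  set v : ℝ := k.im with hv
  have hkball1 : k ∈ ball (k₀ : ℂ) ρ₁ := by
    refine Metric.mem_ball.mpr (lt_of_lt_of_le hk ?_)
    exact le_trans (min_le_left _ _) (min_le_left _ _)
  have hkball2 : dist k (k₀ : ℂ) < ρ₂ :=
    lt_of_lt_of_le hk (le_trans (min_le_left _ _) (min_le_right _ _))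
  -- real part of k is also in the balls
  have hredist : dist ((k.re : ℝ) : ℂ) (k₀ : ℂ) ≤ dist k (k₀ : ℂ) := by
    rw [Complex.dist_eq, Complex.dist_eq]
    have : ((k.re : ℝ) : ℂ) - (k₀ : ℂ) = (((k.re - k₀ : ℝ)) : ℂ) := by push_cast; ring
    rw [this]
    rw [Complex.norm_real]
    have := Complex.abs_re_le_norm (k - (k₀ : ℂ))
    simpa using this
  have hreball1 : ((k.re : ℝ) : ℂ) ∈ ball (k₀ : ℂ) ρ₁ :=
    Metric.mem_ball.mpr (lt_of_le_of_lt hredist (Metric.mem_ball.mp hkball1))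
  have hreball2 : dist ((k.re : ℝ) : ℂ) (k₀ : ℂ) < ρ₂ := lt_of_le_of_lt hredist hkball2
  -- w is real at real points of ball ρ₂
  have hwreal : (w ((k.re : ℝ) : ℂ)).im = 0 := by
    have hgre : 0 < (g ((k.re : ℝ) : ℂ)).re := (hball2 _ hreball2).2
    have hgeq : g ((k.re : ℝ) : ℂ) = (((g ((k.re : ℝ) : ℂ)).re : ℝ) : ℂ) := by
      apply Complex.ext
      · simp
      · simpa using hreal k.re
    simp only [hwdef]
    rw [hgeq, hexp, ← Complex.ofReal_cpow hgre.le]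
    simp
  -- Lipschitz bound : |Im (w k)| ≤ L * |v|
  have hLip : ‖w k - w ((k.re : ℝ) : ℂ)‖ ≤ L * |v| := by
    have h1 := hlip.dist_le_mul k (hballt hkball1) (((k.re : ℝ) : ℂ)) (hballt hreball1)
    rw [Complex.dist_eq, Complex.dist_eq] at h1
    have h2 : ‖k - ((k.re : ℝ) : ℂ)‖ = |v| := by
      have : k - ((k.re : ℝ) : ℂ) = (k.im : ℝ) * Complex.I := by
        apply Complex.ext <;> simp
      rw [this]
      simp [hv]
    rw [h2] at h1
    calc ‖w k - w ((k.re : ℝ) : ℂ)‖ ≤ (K : ℝ) * |v| := h1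
    _ ≤ L * |v| := by
        have : (K : ℝ) ≤ L := by simp [hL]
        exact mul_le_mul_of_nonneg_right this (abs_nonneg _)
  have hImw : |(w k).im| ≤ L * |v| := by
    have : |(w k).im| = |(w k - w ((k.re : ℝ) : ℂ)).im| := by
      rw [Complex.sub_im, hwreal, sub_zero]
    rw [this]
    exact le_trans (Complex.abs_im_le_norm _) hLip
  have hRew : c / 2 < (w k).re := (hball2 _ hkball2).1
  -- the key identity: ν.im = u * (w k).im + v * (w k).re
  have hkey : ν.im = u * (w k).im + v * (w k).re := by
    have h := hinv_right ν hνr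
    have h2 : ((hinv ν - (k₀ : ℂ)) * w (hinv ν)).im = ν.im := by rw [h]
    rw [← h2]
    rw [Complex.mul_im]
    simp [hu, hv, hkdef]
  -- |u| ≤ ρ
  have huρ : |u| ≤ ρ := by
    have := Complex.abs_re_le_norm (k - (k₀ : ℂ))
    have h3 : (k - (k₀ : ℂ)).re = u := by simp [hu]
    rw [h3] at this
    have h4 : ‖k - (k₀ : ℂ)‖ < ρ := by rwa [Complex.dist_eq] at hk
    linarith
  have hcross : |u * (w k).im| ≤ (c / 4) * |v| := by
    rw [abs_mul]
    calc |u| * |(w k).im| ≤ ρ * (L * |v|) := by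
          apply mul_le_mul huρ hImw (abs_nonneg _) hρpos.le
    _ = (ρ * L) * |v| := by ring
    _ ≤ (c / 4) * |v| := mul_le_mul_of_nonneg_right hρL (abs_nonneg _)
  clear_value w c0 c L ρ k u v
  clear hlip hballt hδ hball2 hev hcont hwan han hinv_an hinv_right hredist hνδ hνr hν
    hkball1 hkball2 hreball1 hreball2 hwreal hLip hgk₀ hexp hwk₀ hslit ht hinvcont
  constructor
  · intro him
    by_contra hcon
    push_neg at hcon
    have hv0 : v ≤ 0 := hcon
    have h1 : v * (w k).re ≤ v * (c / 2) := by nlinarith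
    have h2 : |v| = -v := abs_of_nonpos hv0
    have h3 : u * (w k).im ≤ (c / 4) * (-v) := by
      have := le_abs_self (u * (w k).im)
      rw [h2] at hcross
      linarith
    have h4 : ν.im ≤ (c / 4) * (-v) + v * (c / 2) := by rw [hkey]; linarith
    nlinarith
  · intro him
    by_contra hcon
    push_neg at hcon
    have hv0 : 0 ≤ v := hcon
    have h1 : v * (c / 2) ≤ v * (w k).re := by nlinarith
    have h2 : |v| = v := abs_of_nonneg hv0
    have h3 : -((c / 4) * v) ≤ u * (w k).im := by
      have := neg_abs_le (u * (w k).im)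
      rw [h2] at hcross
      linarith
    have h4 : -((c / 4) * v) + v * (c / 2) ≤ ν.im := by rw [hkey]; linarith
    have h5 : 0 ≤ (c / 4) * v := by positivity
    have h6 : v * (c / 2) = 2 * ((c / 4) * v) := by ring
    linarith
end

section
/- Under assumption ‖ε₁‖_∞ < (μ₁ − μ₀)·inf ε₀ / μ₀ with ε₁ ≥ 0 not a.e. zero, and given: (i) κ_max is continuous and non-decreasing on (μ₀, μ₁), (ii) there exists λ' ∈ (μ₀, μ₁) with κ_max(λ') < 1, and (iii) κ_max(λ) → ∞ as λ ↗ μ₁; then there exists λ ∈ (λ', μ₁) with κ_max(λ) = 1, and hence λ is an eigenvalue of the perturbed operator L(k_x) in the gap (μ₀, μ₁). -/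
open Set Filter

/-- Theorem 4.3 (conclusion via the intermediate value argument): under the
smallness condition on the perturbation, κ_max attains the value 1 in (λ',μ₁),
producing an eigenvalue of the perturbed operator L(k_x) in the gap. -/
theorem stmt18 (μ₀ μ₁ normε₁ infε₀ lam' : ℝ) (κmax : ℝ → ℝ)
    (isEigenvalueOfL : ℝ → Prop)
    (hμ₀ : 0 < μ₀) (hgap : μ₀ < μ₁) (hinf : 0 < infε₀)
    (hε₁ : 0 ≤ normε₁)
    (hpert : normε₁ < (μ₁ - μ₀) * infε₀ / μ₀)
    (hcont : ContinuousOn κmax (Ioo μ₀ μ₁))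
    (hmono : MonotoneOn κmax (Ioo μ₀ μ₁))
    (hlam' : lam' ∈ Ioo μ₀ μ₁) (hκ' : κmax lam' < 1)
    (hblow : Tendsto κmax (nhdsWithin μ₁ (Iio μ₁)) atTop)
    -- λ ∈ (μ₀,μ₁) is an eigenvalue of L(k_x) whenever κ_max(λ) = 1
    (heig : ∀ lam ∈ Ioo μ₀ μ₁, κmax lam = 1 → isEigenvalueOfL lam) :
    ∃ lam : ℝ, lam ∈ Ioo lam' μ₁ ∧ κmax lam = 1 ∧ isEigenvalueOfL lam := by
  obtain ⟨hμ₀l, hlμ₁⟩ := hlam'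
  -- find b ∈ (lam', μ₁) with κmax b ≥ 2
  have hne : (nhdsWithin μ₁ (Iio μ₁)).NeBot := nhdsLT_neBot μ₁
  have h1 : ∀ᶠ x in nhdsWithin μ₁ (Iio μ₁), x ∈ Ioo lam' μ₁ := by
    have : Ioo lam' μ₁ = Ioi lam' ∩ Iio μ₁ := rfl
    rw [this]
    exact Filter.inter_mem (mem_nhdsWithin_of_mem_nhds (Ioi_mem_nhds hlμ₁))
      self_mem_nhdsWithin
  obtain ⟨b, hb2, hb⟩ := ((hblow.eventually_ge_atTop 2).and h1).exists
  -- IVT on [lam', b]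
  have hsub : Icc lam' b ⊆ Ioo μ₀ μ₁ := fun x hx =>
    ⟨lt_of_lt_of_le hμ₀l hx.1, lt_of_le_of_lt hx.2 hb.2⟩
  have hIcc : Icc (κmax lam') (κmax b) ⊆ κmax '' Icc lam' b :=
    intermediate_value_Icc hb.1.le (hcont.mono hsub)
  obtain ⟨c, hc, hc1⟩ := hIcc ⟨hκ'.le, by linarith⟩
  have hcIoo : c ∈ Ioo μ₀ μ₁ := hsub hc
  have hclam' : lam' < c := by
    rcases lt_or_eq_of_le hc.1 with h | h
    · exact h
    · exfalso; rw [← h] at hc1; linarith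
  exact ⟨c, ⟨hclam', hcIoo.2⟩, hc1, heig c hcIoo hc1⟩
end
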